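/- arXiv:2508.20071 — 4 statements merged into one kernel-verified Lean document; each statement's English description precedes it below -/
import Mathlib

section
/- Let r : ℝⁿ → ℝ be differentiable with M-Hölder continuous gradient of exponent β ∈ (0,1], and define the forward-difference approximation g_r(x,λ) with components (r(x + λ e_i) - r(x))/λ for λ > 0. Then ‖∇r(x) - g_r(x,λ)‖ ≤ (√n · M/(β+1))·λ^β for all x ∈ ℝⁿ. -/
open RealInnerProductSpace intervalIntegral

lemma taylor_holder_aux {E : Type*} [NormedAddCommGroup E] [InnerProductSpace ℝ E] [CompleteSpace E]
    (r : E → ℝ) (r' : E → E) (M β : ℝ) (hM : 0 ≤ M) (hβ : 0 < β)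
    (hr : ∀ x, HasGradientAt r (r' x) x)
    (hrHold : ∀ x y, ‖r' y - r' x‖ ≤ M * ‖y - x‖ ^ β)
    (x v : E) :
    |r (x + v) - r x - (inner ℝ (r' x) v : ℝ)| ≤ M / (β + 1) * ‖v‖ ^ (β + 1) := by
  have hcont : Continuous r' := by
    rw [continuous_iff_continuousAt]
    intro z
    rw [ContinuousAt, tendsto_iff_norm_sub_tendsto_zero]
    have h0 : Filter.Tendsto (fun y => M * ‖y - z‖ ^ β) (nhds z) (nhds 0) := by
      have h1 : Filter.Tendsto (fun y : E => ‖y - z‖) (nhds z) (nhds 0) :=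
        tendsto_norm_sub_self z
      have h2 : Filter.Tendsto (fun s : ℝ => M * s ^ β) (nhds 0) (nhds (M * (0:ℝ) ^ β)) :=
        (continuousAt_const.mul (Real.continuousAt_rpow_const 0 β (Or.inr hβ.le)))
      have := h2.comp h1
      simpa [Function.comp_def, Real.zero_rpow hβ.ne'] using this
    exact squeeze_zero (fun y => norm_nonneg _) (fun y => hrHold z y) h0
  have hline : ∀ t : ℝ, HasDerivAt (fun t : ℝ => x + t • v) v t := by
    intro t
    simpa using ((hasDerivAt_id t).smul_const v).const_add x
  have hφ : ∀ t : ℝ, HasDerivAt (fun t => r (x + t • v)) (inner ℝ (r' (x + t • v)) v : ℝ) t := by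
    intro t
    have := (hr (x + t • v)).hasFDerivAt.comp_hasDerivAt t (hline t)
    simpa [Function.comp_def] using this
  have hcd : Continuous fun t : ℝ => (inner ℝ (r' (x + t • v)) v : ℝ) :=
    (hcont.comp (continuous_const.add (continuous_id.smul continuous_const))).inner
      continuous_const
  have hint : IntervalIntegrable (fun t : ℝ => (inner ℝ (r' (x + t • v)) v : ℝ))
      MeasureTheory.volume 0 1 := hcd.intervalIntegrable 0 1
  have key : ∫ t in (0:ℝ)..1, (inner ℝ (r' (x + t • v)) v : ℝ) = r (x + v) - r x := by
    have := integral_eq_sub_of_hasDerivAt (fun t _ => hφ t) hint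
    simpa using this
  have hdiff : r (x + v) - r x - (inner ℝ (r' x) v : ℝ)
      = ∫ t in (0:ℝ)..1, (inner ℝ (r' (x + t • v) - r' x) v : ℝ) := by
    have hsplit : (∫ t in (0:ℝ)..1, (inner ℝ (r' (x + t • v) - r' x) v : ℝ))
        = (∫ t in (0:ℝ)..1, (inner ℝ (r' (x + t • v)) v : ℝ)) - ∫ t in (0:ℝ)..1, (inner ℝ (r' x) v : ℝ) := by
      simp_rw [inner_sub_left]
      exact integral_sub hint intervalIntegrable_const
    rw [hsplit, key]
    simp
  rw [hdiff]
  rw [← Real.norm_eq_abs]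
  have hbound : ∀ t ∈ Set.Ioc (0:ℝ) 1,
      ‖(inner ℝ (r' (x + t • v) - r' x) v : ℝ)‖ ≤ M * t ^ β * ‖v‖ ^ (β + 1) := by
    intro t ht
    calc ‖(inner ℝ (r' (x + t • v) - r' x) v : ℝ)‖ ≤ ‖r' (x + t • v) - r' x‖ * ‖v‖ :=
          norm_inner_le_norm _ _
      _ ≤ (M * ‖t • v‖ ^ β) * ‖v‖ := by
          have := hrHold x (x + t • v)
          simp only [add_sub_cancel_left] at this
          exact mul_le_mul_of_nonneg_right this (norm_nonneg v)
      _ = M * t ^ β * ‖v‖ ^ (β + 1) := by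
          rw [norm_smul, Real.norm_eq_abs, abs_of_pos ht.1,
            Real.mul_rpow ht.1.le (norm_nonneg v), Real.rpow_add_one' (by positivity)
              (by linarith)]
          ring
  have hgint : IntervalIntegrable (fun t : ℝ => M * t ^ β * ‖v‖ ^ (β + 1))
      MeasureTheory.volume 0 1 := by
    apply Continuous.intervalIntegrable
    have : Continuous fun t : ℝ => t ^ β :=
      continuous_iff_continuousAt.mpr fun t => Real.continuousAt_rpow_const t β (Or.inr hβ.le)
    continuity
  have := norm_integral_le_of_norm_le (a := (0:ℝ)) (b := 1)
    (μ := MeasureTheory.volume) (f := fun t => (inner ℝ (r' (x + t • v) - r' x) v : ℝ))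
    (g := fun t => M * t ^ β * ‖v‖ ^ (β + 1)) zero_le_one ?_ hgint
  · refine this.trans ?_
    have hI : (∫ t in (0:ℝ)..1, M * t ^ β * ‖v‖ ^ (β + 1))
        = M * (1 / (β + 1)) * ‖v‖ ^ (β + 1) := by
      rw [intervalIntegral.integral_mul_const, intervalIntegral.integral_const_mul,
        integral_rpow (Or.inl (by linarith))]
      rw [Real.one_rpow, Real.zero_rpow (by linarith : β + 1 ≠ 0)]
      ring
    rw [hI]
    have h1 : (0:ℝ) < β + 1 := by linarith
    have h2 : (0:ℝ) ≤ ‖v‖ ^ (β + 1) := Real.rpow_nonneg (norm_nonneg v) _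
    apply le_of_eq; ring
  · refine MeasureTheory.ae_of_all _ fun t ht => ?_
    exact hbound t ht

/-- Forward-difference gradient approximation error under Hölder gradients. -/
theorem forward_difference_error_holder {n : ℕ}
    (r : EuclideanSpace ℝ (Fin n) → ℝ)
    (r' : EuclideanSpace ℝ (Fin n) → EuclideanSpace ℝ (Fin n))
    (M β : ℝ) (hM : 0 < M) (hβ : β ∈ Set.Ioc (0 : ℝ) 1)
    (hr : ∀ x, HasGradientAt r (r' x) x)
    (hrHold : ∀ x y, ‖r' y - r' x‖ ≤ M * ‖y - x‖ ^ β)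
    (x : EuclideanSpace ℝ (Fin n)) (lam : ℝ) (hlam : 0 < lam) :
    ‖r' x - ((EuclideanSpace.equiv (Fin n) ℝ).symm fun i => (r (x + lam • EuclideanSpace.single i 1) - r x) / lam)‖ ≤ (Real.sqrt n * M / (β + 1)) * lam ^ β := by
  set c : ℝ := M / (β + 1) * lam ^ β with hc
  have hc0 : 0 ≤ c := by
    have : (0:ℝ) ≤ lam ^ β := Real.rpow_nonneg hlam.le β
    have hb1 : (0:ℝ) < β + 1 := by linarith [hβ.1]
    positivity
  set g : EuclideanSpace ℝ (Fin n) :=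
    ((EuclideanSpace.equiv (Fin n) ℝ).symm
      fun i => (r (x + lam • EuclideanSpace.single i 1) - r x) / lam) with hg
  have hcomp : ∀ i, |(r' x - g) i| ≤ c := by
    intro i
    have htay := taylor_holder_aux r r' M β hM.le hβ.1 hr hrHold x
      (lam • EuclideanSpace.single i 1)
    have hnv : ‖lam • (EuclideanSpace.single i 1 : EuclideanSpace ℝ (Fin n))‖ = lam := by
      rw [norm_smul, EuclideanSpace.norm_single, Real.norm_eq_abs, abs_of_pos hlam,
        norm_one, mul_one]
    have hip : (inner ℝ (r' x) (lam • (EuclideanSpace.single i 1 : EuclideanSpace ℝ (Fin n))) : ℝ)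
        = lam * (r' x i) := by
      rw [real_inner_smul_right, real_inner_comm, EuclideanSpace.inner_single_left]
      simp
    rw [hnv, hip] at htay
    have hrp : lam ^ (β + 1) = lam ^ β * lam :=
      Real.rpow_add_one' hlam.le (by linarith [hβ.1])
    have hgi : (r' x - g) i = r' x i - (r (x + lam • EuclideanSpace.single i 1) - r x) / lam := by
      simp [hg]
    rw [hgi]
    have h1 : r' x i - (r (x + lam • EuclideanSpace.single i 1) - r x) / lam
        = -(r (x + lam • EuclideanSpace.single i 1) - r x - lam * r' x i) / lam := by
      field_simp
      ring
    rw [h1, abs_div, abs_neg, abs_of_pos hlam, div_le_iff₀ hlam, hc]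
    calc |r (x + lam • EuclideanSpace.single i 1) - r x - lam * r' x i|
        ≤ M / (β + 1) * lam ^ (β + 1) := htay
      _ = M / (β + 1) * lam ^ β * lam := by rw [hrp]; ring
  have hnorm : ‖r' x - g‖ ≤ Real.sqrt n * c := by
    rw [EuclideanSpace.norm_eq]
    have hsum : (∑ i, ‖(r' x - g) i‖ ^ 2) ≤ (n : ℝ) * c ^ 2 := by
      calc (∑ i, ‖(r' x - g) i‖ ^ 2) ≤ ∑ _i : Fin n, c ^ 2 := by
            apply Finset.sum_le_sum
            intro i _
            have := hcomp i
            rw [Real.norm_eq_abs]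
            exact pow_le_pow_left₀ (abs_nonneg _) this 2
        _ = (n : ℝ) * c ^ 2 := by
            rw [Finset.sum_const, Finset.card_univ, Fintype.card_fin, nsmul_eq_mul]
    calc Real.sqrt (∑ i, ‖(r' x - g) i‖ ^ 2) ≤ Real.sqrt ((n : ℝ) * c ^ 2) :=
          Real.sqrt_le_sqrt hsum
      _ = Real.sqrt n * c := by
          rw [Real.sqrt_mul (Nat.cast_nonneg n), Real.sqrt_sq hc0]
  refine hnorm.trans (le_of_eq ?_)
  rw [hc]; ring
end

section
/- Let f = s + r with s having L-Lipschitz gradient and r having M-Hölder gradient of exponent β, and let g_f(x,λ) be the central-difference approximation with components (f(x+λe_i) - f(x-λe_i))/(2λ). Then ‖∇f(x) - g_f(x,λ)‖ ≤ (√n·L/2)·λ + (√n·M/(β+1))·λ^β. -/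
open RealInnerProductSpace intervalIntegral

lemma taylor_holder {E : Type*} [NormedAddCommGroup E] [InnerProductSpace ℝ E] [CompleteSpace E]
    (f : E → ℝ) (f' : E → E) (C β : ℝ) (hC : 0 ≤ C) (hβ : 0 < β)
    (hf : ∀ x, HasGradientAt f (f' x) x)
    (hH : ∀ x y, ‖f' y - f' x‖ ≤ C * ‖y - x‖ ^ β)
    (x u : E) :
    |f (x + u) - f x - ⟪f' x, u⟫| ≤ C / (β + 1) * ‖u‖ ^ (β + 1) := by
  rcases eq_or_ne u 0 with rfl | hu
  · simp [Real.zero_rpow (by positivity : β + 1 ≠ 0)]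
  have hder : ∀ t : ℝ, HasDerivAt (fun t : ℝ => f (x + t • u)) ⟪f' (x + t • u), u⟫ t := by
    intro t
    have h1 : HasDerivAt (fun t : ℝ => x + t • u) u t := by
      simpa using ((hasDerivAt_id t).smul_const u).const_add x
    have h2 := (hf (x + t • u)).hasFDerivAt
    have h3 := h2.comp_hasDerivAt t h1
    simp at h3
    exact h3
  have hf'c : Continuous f' := by
    rw [continuous_iff_continuousAt]
    intro a
    rw [ContinuousAt, tendsto_iff_dist_tendsto_zero]
    have hlim : Filter.Tendsto (fun y => C * ‖y - a‖ ^ β) (nhds a) (nhds 0) := by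
      have h0 : Filter.Tendsto (fun y : E => ‖y - a‖) (nhds a) (nhds 0) :=
        tendsto_norm_sub_self a
      have h1 : Filter.Tendsto (fun t : ℝ => t ^ β) (nhds 0) (nhds 0) := by
        have := (Real.continuousAt_rpow_const 0 β (Or.inr hβ.le))
        simpa [Real.zero_rpow hβ.ne'] using this.tendsto
      simpa using (h1.comp h0).const_mul C
    refine squeeze_zero (fun y => dist_nonneg) (fun y => ?_) hlim
    rw [dist_eq_norm]
    exact hH a y
  have hcont : Continuous fun t : ℝ => ⟪f' (x + t • u), u⟫ := by
    exact ((hf'c.comp (by continuity)).inner continuous_const)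
  have hFTC : ∫ t in (0:ℝ)..1, ⟪f' (x + t • u), u⟫ = f (x + u) - f x := by
    have := intervalIntegral.integral_eq_sub_of_hasDerivAt (fun t _ => hder t)
      (hcont.intervalIntegrable 0 1)
    simpa using this
  have hint : IntervalIntegrable (fun t : ℝ => ⟪f' (x + t • u), u⟫) MeasureTheory.volume 0 1 :=
    hcont.intervalIntegrable 0 1
  have hsplit : f (x + u) - f x - ⟪f' x, u⟫
      = ∫ t in (0:ℝ)..1, (⟪f' (x + t • u), u⟫ - ⟪f' x, u⟫) := by
    rw [intervalIntegral.integral_sub hint (intervalIntegrable_const), hFTC,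
      intervalIntegral.integral_const]
    simp
  rw [hsplit]
  have hbint : IntervalIntegrable (fun t : ℝ => C * ‖u‖ ^ (β + 1) * t ^ β)
      MeasureTheory.volume 0 1 :=
    (intervalIntegral.intervalIntegrable_rpow (Or.inl hβ.le)).const_mul _
  have hbound : ‖∫ t in (0:ℝ)..1, (⟪f' (x + t • u), u⟫ - ⟪f' x, u⟫)‖ ≤
      |∫ t in (0:ℝ)..1, C * ‖u‖ ^ (β + 1) * t ^ β| :=
    intervalIntegral.norm_integral_le_abs_of_norm_le ?_ hbint
  · calc |∫ t in (0:ℝ)..1, (⟪f' (x + t • u), u⟫ - ⟪f' x, u⟫)| ≤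
        ∫ t in (0:ℝ)..1, C * ‖u‖ ^ (β + 1) * t ^ β := by
          rw [← Real.norm_eq_abs]
          refine hbound.trans (le_of_eq (abs_of_nonneg ?_))
          refine intervalIntegral.integral_nonneg (by norm_num) fun t ht => ?_
          have : (0:ℝ) ≤ t ^ β := Real.rpow_nonneg ht.1 β
          positivity
    _ = C * ‖u‖ ^ (β + 1) * ((1 ^ (β + 1) - 0 ^ (β + 1)) / (β + 1)) := by
        rw [intervalIntegral.integral_const_mul, integral_rpow (Or.inl (by linarith))]
    _ = C / (β + 1) * ‖u‖ ^ (β + 1) := by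
        rw [Real.one_rpow, Real.zero_rpow (by positivity)]
        ring
  · rw [MeasureTheory.ae_restrict_iff' measurableSet_uIoc]
    filter_upwards with t ht
    rw [Set.uIoc_of_le (by norm_num : (0:ℝ) ≤ 1)] at ht
    have ht0 : 0 < t := ht.1
    have h1 : ⟪f' (x + t • u), u⟫ - ⟪f' x, u⟫ = ⟪f' (x + t • u) - f' x, u⟫ := by
      rw [inner_sub_left]
    rw [Real.norm_eq_abs, h1]
    calc |⟪f' (x + t • u) - f' x, u⟫| ≤ ‖f' (x + t • u) - f' x‖ * ‖u‖ :=
        abs_real_inner_le_norm _ _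
      _ ≤ C * ‖x + t • u - x‖ ^ β * ‖u‖ := by
          exact mul_le_mul_of_nonneg_right (hH x _) (norm_nonneg u)
      _ = C * ‖u‖ ^ (β + 1) * t ^ β := by
          rw [show x + t • u - x = t • u by abel, norm_smul, Real.norm_eq_abs,
            abs_of_pos ht0, Real.mul_rpow ht0.le (norm_nonneg u),
            Real.rpow_add_one (norm_ne_zero_iff.mpr hu)]
          ring

set_option maxHeartbeats 1000000 in
/-- Central-difference gradient approximation error for `f = s + r` with Lipschitz
plus Hölder gradient components. -/
theorem central_difference_error {n : ℕ}
    (s r : EuclideanSpace ℝ (Fin n) → ℝ)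
    (s' r' : EuclideanSpace ℝ (Fin n) → EuclideanSpace ℝ (Fin n))
    (L M β : ℝ) (hL : 0 < L) (hM : 0 < M) (hβ : β ∈ Set.Ioc (0 : ℝ) 1)
    (hs : ∀ x, HasGradientAt s (s' x) x)
    (hr : ∀ x, HasGradientAt r (r' x) x)
    (hsLip : ∀ x y, ‖s' y - s' x‖ ≤ L * ‖y - x‖)
    (hrHold : ∀ x y, ‖r' y - r' x‖ ≤ M * ‖y - x‖ ^ β)
    (x : EuclideanSpace ℝ (Fin n)) (lam : ℝ) (hlam : 0 < lam) :
    ‖(s' x + r' x) -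
      ((EuclideanSpace.equiv (Fin n) ℝ).symm fun i => ((s (x + lam • EuclideanSpace.single i 1) + r (x + lam • EuclideanSpace.single i 1))
        - (s (x - lam • EuclideanSpace.single i 1) + r (x - lam • EuclideanSpace.single i 1)))
          / (2 * lam))‖
      ≤ (Real.sqrt n * L / 2) * lam + (Real.sqrt n * M / (β + 1)) * lam ^ β := by
  obtain ⟨hβ0, hβ1⟩ := hβ
  set c : ℝ := L / 2 * lam + M / (β + 1) * lam ^ β with hc_def
  have hlamβ : (0:ℝ) < lam ^ β := Real.rpow_pos_of_pos hlam β
  have hc : 0 ≤ c := by positivity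
  set G : EuclideanSpace ℝ (Fin n) := s' x + r' x with hG_def
  set v : EuclideanSpace ℝ (Fin n) := G -
      ((EuclideanSpace.equiv (Fin n) ℝ).symm fun i => ((s (x + lam • EuclideanSpace.single i 1) + r (x + lam • EuclideanSpace.single i 1))
        - (s (x - lam • EuclideanSpace.single i 1) + r (x - lam • EuclideanSpace.single i 1)))
          / (2 * lam)) with hv_def
  have hsH : ∀ a b, ‖s' b - s' a‖ ≤ L * ‖b - a‖ ^ (1:ℝ) := by
    intro a b; rw [Real.rpow_one]; exact hsLip a b
  have hEb : L / 2 * (lam * lam) + M / (β + 1) * (lam ^ β * lam) = c * lam := by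
    rw [hc_def]; ring
  have hvi : ∀ i, ‖v i‖ ≤ c := by
    intro i
    set e : EuclideanSpace ℝ (Fin n) := EuclideanSpace.single i (1:ℝ) with he_def
    set u : EuclideanSpace ℝ (Fin n) := lam • e with hu_def
    have hnu : ‖u‖ = lam := by
      rw [hu_def, norm_smul, he_def, EuclideanSpace.norm_single]
      simp [Real.norm_eq_abs, abs_of_pos hlam]
    have hnnu : ‖-u‖ = lam := by rw [norm_neg, hnu]
    have hGe : ⟪G, u⟫ = lam * G i := by
      rw [hu_def, real_inner_smul_right, he_def]
      have := EuclideanSpace.inner_single_right (𝕜 := ℝ) i 1 G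
      simp only [RCLike.conj_to_real, one_mul] at this
      rw [this]
    have hGen : ⟪G, -u⟫ = -(lam * G i) := by rw [inner_neg_right, hGe]
    -- Taylor bounds
    have taylor : ∀ w : EuclideanSpace ℝ (Fin n), ‖w‖ = lam →
        |(s (x + w) + r (x + w)) - (s x + r x) - ⟪G, w⟫| ≤ c * lam := by
      intro w hw
      have hA := taylor_holder s s' L 1 hL.le one_pos hs hsH x w
      have hB := taylor_holder r r' M β hM.le hβ0 hr hrHold x w
      rw [hw] at hA hB
      have h2 : lam ^ ((1:ℝ) + 1) = lam * lam := by
        rw [Real.rpow_add_one hlam.ne', Real.rpow_one]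
      have h3 : lam ^ (β + 1) = lam ^ β * lam := Real.rpow_add_one hlam.ne' β
      rw [show L / ((1:ℝ)+1) = L / 2 by norm_num] at hA
      rw [h2] at hA; rw [h3] at hB
      have hsum : (s (x + w) + r (x + w)) - (s x + r x) - ⟪G, w⟫
          = (s (x + w) - s x - ⟪s' x, w⟫) + (r (x + w) - r x - ⟪r' x, w⟫) := by
        rw [hG_def, inner_add_left]; ring
      rw [hsum, ← hEb]
      exact (abs_add_le _ _).trans (add_le_add hA hB)
    have hA := taylor u hnu
    have hB := taylor (-u) hnnu
    rw [hGen] at hB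
    rw [hGe] at hA
    have hxsub : x + -u = x - u := by abel
    rw [hxsub] at hB
    -- coordinate value
    have hvival : v i = G i - ((s (x + u) + r (x + u)) - (s (x - u) + r (x - u))) / (2 * lam) := by
      rw [hv_def]
      simp [hu_def, he_def]
    rw [hvival, Real.norm_eq_abs]
    have hkey : |((s (x + u) + r (x + u)) - (s (x - u) + r (x - u))) - 2 * lam * G i|
        ≤ 2 * (c * lam) := by
      have : ((s (x + u) + r (x + u)) - (s (x - u) + r (x - u))) - 2 * lam * G i
          = ((s (x + u) + r (x + u)) - (s x + r x) - lam * G i)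
            - ((s (x - u) + r (x - u)) - (s x + r x) - -(lam * G i)) := by ring
      rw [this]
      calc _ ≤ |(s (x + u) + r (x + u)) - (s x + r x) - lam * G i|
          + |(s (x - u) + r (x - u)) - (s x + r x) - -(lam * G i)| := abs_sub _ _
        _ ≤ c * lam + c * lam := add_le_add hA hB
        _ = 2 * (c * lam) := by ring
    have h2l : (0:ℝ) < 2 * lam := by linarith
    rw [abs_sub_comm]
    rw [show ((s (x + u) + r (x + u)) - (s (x - u) + r (x - u))) / (2 * lam) - G i
        = (((s (x + u) + r (x + u)) - (s (x - u) + r (x - u))) - 2 * lam * G i) / (2 * lam) by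
      field_simp]
    rw [abs_div, abs_of_pos h2l, div_le_iff₀ h2l]
    calc _ ≤ 2 * (c * lam) := hkey
      _ = c * (2 * lam) := by ring
  -- norm bound
  have hnv : ‖v‖ ≤ Real.sqrt n * c := by
    rw [EuclideanSpace.norm_eq]
    have hsum : ∑ i, ‖v i‖ ^ 2 ≤ n * c ^ 2 := by
      calc ∑ i, ‖v i‖ ^ 2 ≤ ∑ _i : Fin n, c ^ 2 :=
          Finset.sum_le_sum fun i _ => pow_le_pow_left₀ (norm_nonneg _) (hvi i) 2
        _ = n * c ^ 2 := by simp [mul_comm]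
      
    calc Real.sqrt (∑ i, ‖v i‖ ^ 2) ≤ Real.sqrt (n * c ^ 2) := Real.sqrt_le_sqrt hsum
      _ = Real.sqrt n * c := by
        rw [Real.sqrt_mul (by positivity), Real.sqrt_sq hc]
  refine hnv.trans (le_of_eq ?_)
  rw [hc_def]; ring
end

section
/- Let F = f + h with f differentiable satisfying the Hölder–Lipschitz descent inequality with constants L, M, β, and let g be a gradient approximation with ‖∇f(x) - g‖ ≤ λ√n L/2 + √n (M/(β+1)) λ^β, where 0 < λ ≤ ε/(σ√n). Let x̄ satisfy the subproblem descent inequality ⟨g, s⟩ + (1/2)⟨Bs, s⟩ + (σ/2)‖s‖² + h(x̄) ≤ h(x) with s = x̄ - x, ‖B‖ ≤ B̄, and suppose σ‖s‖ ≥ ε. Then F(x̄) ≤ F(x) - ((σ - 2L - B̄)/2)‖s‖² + ((n^{(1-β)/2} M + M)/(β+1))‖s‖^{β+1}. -/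
open RealInnerProductSpace

set_option maxHeartbeats 1000000

/-- Sufficient-descent lemma (Lemma 3 of the paper): under the mixed
Lipschitz–Hölder descent inequality, the gradient-approximation error bound,
the subproblem inequality, and `σ‖s‖ ≥ ε`, one obtains the quantified decrease
of `F = f + h`. -/
theorem sufficient_descent {n : ℕ}
    (f h : EuclideanSpace ℝ (Fin n) → ℝ)
    (f' : EuclideanSpace ℝ (Fin n) → EuclideanSpace ℝ (Fin n))
    (L M β Bbar ε σ lam : ℝ)
    (hL : 0 < L) (hM : 0 < M) (hβ : β ∈ Set.Ioc (0 : ℝ) 1) (hBbar : 0 ≤ Bbar)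
    (hε : ε ∈ Set.Ioo (0 : ℝ) 1) (hσ : 1 ≤ σ)
    (hdesc : ∀ x y, f y ≤ f x + ⟪f' x, y - x⟫ + (L / 2) * ‖y - x‖ ^ 2
      + (M / (β + 1)) * ‖y - x‖ ^ (β + 1))
    (x xbar : EuclideanSpace ℝ (Fin n)) (g : EuclideanSpace ℝ (Fin n))
    (B : EuclideanSpace ℝ (Fin n) →L[ℝ] EuclideanSpace ℝ (Fin n))
    (hBnorm : ‖B‖ ≤ Bbar)
    (hlam : 0 < lam) (hlamle : lam ≤ ε / (σ * Real.sqrt n))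
    (hgerr : ‖f' x - g‖ ≤ lam * Real.sqrt n * L / 2 + Real.sqrt n * (M / (β + 1)) * lam ^ β)
    (hsub : ⟪g, xbar - x⟫ + (1 / 2 : ℝ) * ⟪B (xbar - x), xbar - x⟫
      + (σ / 2) * ‖xbar - x‖ ^ 2 + h xbar ≤ h x)
    (hstep : ε ≤ σ * ‖xbar - x‖) :
    f xbar + h xbar ≤ f x + h x - ((σ - 2 * L - Bbar) / 2) * ‖xbar - x‖ ^ 2
      + (((n : ℝ) ^ ((1 - β) / 2) * M + M) / (β + 1)) * ‖xbar - x‖ ^ (β + 1) := by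
  obtain ⟨hβ0, hβ1⟩ := hβ
  obtain ⟨hε0, hε1⟩ := hε
  have hσ0 : (0:ℝ) < σ := lt_of_lt_of_le one_pos hσ
  set s : EuclideanSpace ℝ (Fin n) := xbar - x with hs
  set r : ℝ := ‖s‖ with hr
  have hr0 : 0 < r := by
    rcases (norm_nonneg s).lt_or_eq with h' | h'
    · exact h'
    · exfalso; nlinarith [hstep]
  set c : ℝ := Real.sqrt n with hc
  have hc0 : 0 ≤ c := Real.sqrt_nonneg _
  have h1 := hdesc x xbar
  rw [← hs, ← hr] at h1
  clear_value r c
  have hβ1' : (0:ℝ) < β + 1 := by linarith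
  -- c * lam ≤ r
  have hclam : c * lam ≤ r := by
    rcases hc0.lt_or_eq with hcpos | hczero
    · have h1 : lam * (σ * c) ≤ ε := by
        rw [← le_div_iff₀ (by positivity)] ; exact hlamle
      nlinarith
    · rw [← hczero]; nlinarith
  -- key inequality with rpow
  have hkey : c * lam ^ β ≤ (n:ℝ) ^ ((1 - β) / 2) * r ^ β := by
    rcases hc0.lt_or_eq with hcpos | hczero
    · have hn0 : (0:ℝ) < (n:ℝ) := by
        by_contra hcon
        push_neg at hcon
        have : (n:ℝ) = 0 := le_antisymm hcon (Nat.cast_nonneg n)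
        rw [hc, this, Real.sqrt_zero] at hcpos; exact lt_irrefl 0 hcpos
      have h1 : (c * lam) ^ β ≤ r ^ β :=
        Real.rpow_le_rpow (by positivity) hclam hβ0.le
      have h2 : (c * lam) ^ β = c ^ β * lam ^ β :=
        Real.mul_rpow hc0 hlam.le
      have h3 : (n:ℝ) ^ ((1 - β) / 2) * c ^ β = c := by
        rw [hc, Real.sqrt_eq_rpow, ← Real.rpow_mul hn0.le, ← Real.rpow_add hn0]
        congr 1
        ring
      have h4 : (0:ℝ) ≤ (n:ℝ) ^ ((1 - β) / 2) := Real.rpow_nonneg (Nat.cast_nonneg n) _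
      calc c * lam ^ β = (n:ℝ) ^ ((1 - β) / 2) * (c ^ β * lam ^ β) := by
            rw [← mul_assoc, h3]
        _ = (n:ℝ) ^ ((1 - β) / 2) * (c * lam) ^ β := by rw [h2]
        _ ≤ (n:ℝ) ^ ((1 - β) / 2) * r ^ β := by
            exact mul_le_mul_of_nonneg_left h1 h4
    · rw [← hczero, zero_mul]
      positivity
  -- split r ^ (β + 1)
  have hsplit : r ^ (β + 1) = r ^ β * r := by
    rw [Real.rpow_add hr0, Real.rpow_one]
  -- inner product decomposition
  have h2 : ⟪f' x - g, s⟫ = ⟪f' x, s⟫ - ⟪g, s⟫ := inner_sub_left _ _ _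
  have h3 : ⟪f' x - g, s⟫ ≤ ‖f' x - g‖ * r := by rw [hr]; exact real_inner_le_norm _ _
  -- B bound
  have h5a : |⟪B s, s⟫| ≤ ‖B s‖ * r := by rw [hr]; exact abs_real_inner_le_norm _ _
  have h5b : ‖B s‖ ≤ ‖B‖ * r := by rw [hr]; exact B.le_opNorm s
  have h5 : -⟪B s, s⟫ ≤ Bbar * r ^ 2 := by
    have := abs_le.mp h5a
    nlinarith [norm_nonneg (B s), norm_nonneg s]
  -- error term bound
  have hE : ‖f' x - g‖ * r ≤ (L / 2) * r ^ 2
      + (n:ℝ) ^ ((1 - β) / 2) * (M / (β + 1)) * r ^ (β + 1) := by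
    have hMb : 0 < M / (β + 1) := by positivity
    have e1 : ‖f' x - g‖ * r ≤ (lam * c * L / 2 + c * (M / (β + 1)) * lam ^ β) * r :=
      mul_le_mul_of_nonneg_right hgerr hr0.le
    have e2 : lam * c * L / 2 * r ≤ (L / 2) * r ^ 2 := by
      have := mul_le_mul_of_nonneg_right hclam hr0.le
      nlinarith
    have e3 : c * (M / (β + 1)) * lam ^ β * r
        ≤ (n:ℝ) ^ ((1 - β) / 2) * (M / (β + 1)) * r ^ (β + 1) := by
      rw [hsplit]
      have hnn : (0:ℝ) ≤ M / (β + 1) * r := by positivity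
      have := mul_le_mul_of_nonneg_right hkey hnn
      nlinarith [this]
    nlinarith [e1, e2, e3]
  have hrw : (((n : ℝ) ^ ((1 - β) / 2) * M + M) / (β + 1)) * r ^ (β + 1)
      = (n:ℝ) ^ ((1 - β) / 2) * (M / (β + 1)) * r ^ (β + 1)
        + (M / (β + 1)) * r ^ (β + 1) := by ring
  rw [hrw]
  linarith [h1, h2, h3, h5, hE, hsub]
end

section
/- Under the hypotheses of the preceding descent lemma, if additionally σ^β ≥ (2L + B̄)/(1-α) + (2 n^{(1-β)/2} M + 2M)/((β+1)(1-α)) · ε^{β-1} for some α ∈ (0,1), then F(x̄) ≤ F(x) - (α/2)σ‖x̄ - x‖² and consequently F(x̄) ≤ F(x) - α ε²/(2σ). -/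
open RealInnerProductSpace

set_option maxHeartbeats 1000000

/-- Well-definedness theorem: if in addition `σ^β` dominates the constant
`(2L + B̄)/(1-α) + (2 n^{(1-β)/2} M + 2M)/((β+1)(1-α)) ε^{β-1}`, then the
sufficient decrease `F(x̄) ≤ F(x) - (α/2)σ‖x̄-x‖²` holds, and consequently
`F(x̄) ≤ F(x) - αε²/(2σ)`. -/
theorem sufficient_decrease_sigma_large {n : ℕ}
    (f h : EuclideanSpace ℝ (Fin n) → ℝ)
    (f' : EuclideanSpace ℝ (Fin n) → EuclideanSpace ℝ (Fin n))
    (L M β Bbar ε σ lam α : ℝ)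
    (hL : 0 < L) (hM : 0 < M) (hβ : β ∈ Set.Ioc (0 : ℝ) 1) (hBbar : 0 ≤ Bbar)
    (hε : ε ∈ Set.Ioo (0 : ℝ) 1) (hσ : 1 ≤ σ) (hα : α ∈ Set.Ioo (0 : ℝ) 1)
    (hdesc : ∀ x y, f y ≤ f x + ⟪f' x, y - x⟫ + (L / 2) * ‖y - x‖ ^ 2
      + (M / (β + 1)) * ‖y - x‖ ^ (β + 1))
    (x xbar : EuclideanSpace ℝ (Fin n)) (g : EuclideanSpace ℝ (Fin n))
    (B : EuclideanSpace ℝ (Fin n) →L[ℝ] EuclideanSpace ℝ (Fin n))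
    (hBnorm : ‖B‖ ≤ Bbar)
    (hlam : 0 < lam) (hlamle : lam ≤ ε / (σ * Real.sqrt n))
    (hgerr : ‖f' x - g‖ ≤ lam * Real.sqrt n * L / 2 + Real.sqrt n * (M / (β + 1)) * lam ^ β)
    (hsub : ⟪g, xbar - x⟫ + (1 / 2 : ℝ) * ⟪B (xbar - x), xbar - x⟫
      + (σ / 2) * ‖xbar - x‖ ^ 2 + h xbar ≤ h x)
    (hstep : ε ≤ σ * ‖xbar - x‖)
    (hσbig : (2 * L + Bbar) / (1 - α)
      + (2 * (n : ℝ) ^ ((1 - β) / 2) * M + 2 * M) / ((β + 1) * (1 - α)) * ε ^ (β - 1)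
        ≤ σ ^ β) :
    f xbar + h xbar ≤ f x + h x - (α / 2) * σ * ‖xbar - x‖ ^ 2 ∧
    f xbar + h xbar ≤ f x + h x - α * ε ^ 2 / (2 * σ) := by
  obtain ⟨hε0, hε1⟩ := hε
  obtain ⟨hα0, hα1⟩ := hα
  obtain ⟨hβ0, hβ1⟩ := hβ
  have hσ0 : (0:ℝ) < σ := lt_of_lt_of_le one_pos hσ
  have hβ1' : (0:ℝ) < β + 1 := by linarith
  have h1α : (0:ℝ) < 1 - α := by linarith
  set m := M / (β + 1) with hm
  have hm0 : 0 < m := div_pos hM hβ1'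
  have hMm : M = m * (β + 1) := by rw [hm, div_mul_cancel₀ M hβ1'.ne']
  set d := xbar - x with hd
  set r := ‖d‖ with hr
  have hr0' : (0:ℝ) ≤ r := norm_nonneg _
  -- n positive
  have hn : (0:ℝ) < Real.sqrt n := by
    rcases Nat.eq_zero_or_pos n with h0 | h0
    · exfalso
      rw [h0] at hlamle
      simp at hlamle
      linarith
    · have : (0:ℝ) < (n:ℝ) := by exact_mod_cast h0
      exact Real.sqrt_pos.mpr this
  have hnpos : (0:ℝ) < (n:ℝ) := Real.sqrt_pos.mp hn
  have hnn : (0:ℝ) ≤ (n:ℝ) := Nat.cast_nonneg n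
  set N := (n:ℝ) ^ ((1 - β)/2 : ℝ) with hN
  have hN0 : 0 < N := Real.rpow_pos_of_pos hnpos _
  -- t = ε/σ ≤ r
  set t := ε / σ with ht
  have ht0 : 0 < t := div_pos hε0 hσ0
  have htr : t ≤ r := (div_le_iff₀ hσ0).mpr (by linarith)
  have hr0 : 0 < r := lt_of_lt_of_le ht0 htr
  -- Step 1: descent
  have hinner : ⟪f' x, d⟫ ≤ ⟪g, d⟫ + ‖f' x - g‖ * r := by
    have h1 : ⟪f' x - g, d⟫ ≤ ‖f' x - g‖ * ‖d‖ := real_inner_le_norm _ _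
    have h2 : ⟪f' x - g, d⟫ = ⟪f' x, d⟫ - ⟪g, d⟫ := inner_sub_left _ _ _
    rw [h2] at h1; linarith
  have hdesc1 : f xbar ≤ f x + ⟪g, d⟫ + ‖f' x - g‖ * r + (L/2) * r^2
      + m * r^(β+1 : ℝ) := by
    have := hdesc x xbar
    rw [← hd, ← hr] at this
    linarith
  -- Step 2: subproblem with B bound
  have hB : -((1/2 : ℝ) * ⟪B d, d⟫) ≤ (Bbar/2) * r^2 := by
    have h1 : |⟪B d, d⟫| ≤ ‖B d‖ * ‖d‖ := abs_real_inner_le_norm _ _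
    have h2 : ‖B d‖ ≤ ‖B‖ * ‖d‖ := B.le_opNorm d
    have h3 : -⟪B d, d⟫ ≤ |⟪B d, d⟫| := neg_le_abs _
    have h4 : ‖B‖ * ‖d‖ ≤ Bbar * r := mul_le_mul_of_nonneg_right hBnorm hr0'
    have h5 : ‖B d‖ * ‖d‖ ≤ ‖B‖ * ‖d‖ * ‖d‖ := mul_le_mul_of_nonneg_right h2 hr0'
    have h6 : ‖B‖ * ‖d‖ * ‖d‖ ≤ Bbar * r * r := mul_le_mul_of_nonneg_right h4 hr0'
    have h7 : Bbar * r * r = Bbar * r^2 := by ring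
    linarith
  have hsub' : ⟪g, d⟫ + h xbar ≤ h x + (Bbar/2) * r^2 - (σ/2) * r^2 := by
    linarith [hsub]
  -- rpow subtraction helper
  have hK : ∀ s : ℝ, 0 < s → s ^ (β - 1 : ℝ) * s = s ^ (β:ℝ) := by
    intro s hs
    have h1 := (Real.rpow_add hs (β - 1) 1).symm
    rw [Real.rpow_one] at h1
    rw [h1]
    congr 1
    ring
  -- t^(β-1) = ε^(β-1) * σ^(1-β)
  set K := ε ^ (β - 1 : ℝ) * σ ^ (1 - β : ℝ) with hKdef
  have hKpos : 0 < K := mul_pos (Real.rpow_pos_of_pos hε0 _) (Real.rpow_pos_of_pos hσ0 _)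
  have hKt : t ^ (β - 1 : ℝ) = K := by
    rw [ht, Real.div_rpow hε0.le hσ0.le, hKdef, div_eq_mul_inv,
      ← Real.rpow_neg hσ0.le]
    ring_nf
  have htb0 : 0 < t ^ (β - 1 : ℝ) := Real.rpow_pos_of_pos ht0 _
  -- error norm bound
  have hlamsq : lam * Real.sqrt n ≤ t := by
    rw [ht, le_div_iff₀ hσ0]
    have h1 : lam * (σ * Real.sqrt n) ≤ ε := by
      rw [← le_div_iff₀ (mul_pos hσ0 hn)]; exact hlamle
    calc lam * Real.sqrt ↑n * σ = lam * (σ * Real.sqrt ↑n) := by ring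
      _ ≤ ε := h1
  have herr2 : Real.sqrt n * lam ^ (β:ℝ) ≤ N * t ^ (β:ℝ) := by
    have hlam' : lam ≤ t / Real.sqrt n := by
      rw [le_div_iff₀ hn]; exact hlamsq
    have h1 : lam ^ (β:ℝ) ≤ (t / Real.sqrt n) ^ (β:ℝ) :=
      Real.rpow_le_rpow hlam.le hlam' hβ0.le
    have h2 : (t / Real.sqrt n) ^ (β:ℝ) = t ^ (β:ℝ) / (Real.sqrt n) ^ (β:ℝ) :=
      Real.div_rpow ht0.le hn.le β
    have hs1 : Real.sqrt n = (n:ℝ) ^ ((1:ℝ)/2) := Real.sqrt_eq_rpow (n:ℝ)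
    have hs2 : (Real.sqrt n) ^ (β:ℝ) = (n:ℝ) ^ (β/2 : ℝ) := by
      rw [hs1, ← Real.rpow_mul hnn]
      congr 1
      ring
    have h3 : Real.sqrt n / (Real.sqrt n) ^ (β:ℝ) = N := by
      rw [hs2, hs1, ← Real.rpow_sub hnpos, hN]
      congr 1
      ring
    calc Real.sqrt n * lam ^ (β:ℝ) ≤ Real.sqrt n * (t ^ (β:ℝ) / (Real.sqrt n) ^ (β:ℝ)) := by
          rw [← h2]; exact mul_le_mul_of_nonneg_left h1 hn.le
      _ = (Real.sqrt n / (Real.sqrt n) ^ (β:ℝ)) * t ^ (β:ℝ) := by ring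
      _ = N * t ^ (β:ℝ) := by rw [h3]
  have herrtot : ‖f' x - g‖ * r ≤ (L/2) * r^2 + N * m * K * r^2 := by
    have hE : ‖f' x - g‖ ≤ (L/2) * r + N * m * t ^ (β:ℝ) := by
      have e1 : lam * Real.sqrt n * L / 2 ≤ (L/2) * r := by
        have := mul_le_mul_of_nonneg_right (le_trans hlamsq htr) hL.le
        linarith
      have e2 : Real.sqrt n * m * lam ^ (β:ℝ) ≤ N * m * t ^ (β:ℝ) := by
        have := mul_le_mul_of_nonneg_left herr2 hm0.le
        calc Real.sqrt n * m * lam ^ (β:ℝ) = m * (Real.sqrt n * lam ^ (β:ℝ)) := by ring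
          _ ≤ m * (N * t ^ (β:ℝ)) := this
          _ = N * m * t ^ (β:ℝ) := by ring
      calc ‖f' x - g‖ ≤ lam * Real.sqrt n * L / 2 + Real.sqrt n * m * lam ^ (β:ℝ) := hgerr
        _ ≤ (L/2) * r + N * m * t ^ (β:ℝ) := by linarith
    have htbr : t ^ (β:ℝ) * r ≤ K * r^2 := by
      have e3 : t ^ (β - 1 : ℝ) * t ≤ t ^ (β - 1 : ℝ) * r :=
        mul_le_mul_of_nonneg_left htr htb0.le
      have e4 : t ^ (β - 1 : ℝ) * t * r ≤ t ^ (β - 1 : ℝ) * r * r :=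
        mul_le_mul_of_nonneg_right e3 hr0'
      rw [hK t ht0] at e4
      rw [← hKt]
      calc t ^ (β:ℝ) * r ≤ t ^ (β - 1 : ℝ) * r * r := e4
        _ = t ^ (β - 1 : ℝ) * r^2 := by ring
    have hE' := mul_le_mul_of_nonneg_right hE hr0'
    have h5 : N * m * (t ^ (β:ℝ) * r) ≤ N * m * (K * r^2) :=
      mul_le_mul_of_nonneg_left htbr (mul_pos hN0 hm0).le
    calc ‖f' x - g‖ * r ≤ ((L/2) * r + N * m * t ^ (β:ℝ)) * r := hE'
      _ = (L/2) * r^2 + N * m * (t ^ (β:ℝ) * r) := by ring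
      _ ≤ (L/2) * r^2 + N * m * (K * r^2) := by linarith
      _ = (L/2) * r^2 + N * m * K * r^2 := by ring
  -- Hölder term bound
  have hrb : m * r^(β+1 : ℝ) ≤ m * K * r^2 := by
    have h1 : r^(β+1 : ℝ) = r^(β-1 : ℝ) * r^2 := by
      rw [← Real.rpow_natCast r 2, ← Real.rpow_add hr0]
      congr 1
      ring
    have h2 : r^(β-1 : ℝ) ≤ t^(β-1 : ℝ) :=
      Real.rpow_le_rpow_of_nonpos ht0 htr (by linarith)
    rw [h1, ← hKt]
    calc m * (r^(β-1 : ℝ) * r^2) = (m * r^(β-1 : ℝ)) * r^2 := by ring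
      _ ≤ (m * t^(β-1 : ℝ)) * r^2 :=
        mul_le_mul_of_nonneg_right (mul_le_mul_of_nonneg_left h2 hm0.le) (sq_nonneg r)
      _ = m * t^(β-1 : ℝ) * r^2 := by ring
  -- scalar inequality from hσbig
  have hσsplit : σ ^ (β:ℝ) * σ ^ (1-β : ℝ) = σ := by
    rw [← Real.rpow_add hσ0]; norm_num
  have hσ1β : 1 ≤ σ ^ (1-β : ℝ) := Real.one_le_rpow hσ (by linarith)
  have hscalar : L + Bbar/2 + m * K + N * m * K ≤ (1-α)/2 * σ := by
    have key1 : (2*L + Bbar) * (β+1) + (2*N*M + 2*M) * ε ^ (β-1 : ℝ)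
        ≤ σ ^ (β:ℝ) * ((β+1) * (1-α)) := by
      have h2 := mul_le_mul_of_nonneg_right hσbig (mul_pos hβ1' h1α).le
      have heq : ((2*L + Bbar) / (1-α)
          + (2*N*M + 2*M) / ((β+1)*(1-α)) * ε ^ (β-1 : ℝ)) * ((β+1)*(1-α))
          = (2*L + Bbar) * (β+1) + (2*N*M + 2*M) * ε ^ (β-1 : ℝ) := by
        field_simp
      rw [heq] at h2
      exact h2
    have key2 := mul_le_mul_of_nonneg_right key1
      (Real.rpow_pos_of_pos hσ0 (1-β)).le
    have key2b : ((2*L + Bbar) * (β+1) + (2*N*M + 2*M) * ε ^ (β-1 : ℝ)) * σ ^ (1-β : ℝ)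
        ≤ (β+1) * (1-α) * σ := by
      calc ((2*L + Bbar) * (β+1) + (2*N*M + 2*M) * ε ^ (β-1 : ℝ)) * σ ^ (1-β : ℝ)
          ≤ σ ^ (β:ℝ) * ((β+1) * (1-α)) * σ ^ (1-β : ℝ) := key2
        _ = (β+1) * (1-α) * (σ ^ (β:ℝ) * σ ^ (1-β : ℝ)) := by ring
        _ = (β+1) * (1-α) * σ := by rw [hσsplit]
    have hA : (0:ℝ) ≤ (2*L + Bbar) * (β+1) := by positivity
    have e1 : (2*L + Bbar) * (β+1) ≤ (2*L + Bbar) * (β+1) * σ ^ (1-β : ℝ) :=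
      le_mul_of_one_le_right hA hσ1β
    have e2 : (2*N*M + 2*M) * ε ^ (β-1 : ℝ) * σ ^ (1-β : ℝ) = (2*N*M + 2*M) * K := by
      rw [hKdef]; ring
    have key3 : (2*L + Bbar) * (β+1) + (2*N*M + 2*M) * K ≤ (β+1) * (1-α) * σ := by
      linarith [key2b, e1, e2]
    rw [hMm] at key3
    have hscalar2 : (β+1) * (L + Bbar/2 + m * K + N * m * K)
        ≤ (β+1) * ((1-α)/2 * σ) := by linarith [key3]
    exact le_of_mul_le_mul_left hscalar2 hβ1'
  -- main conclusion 1
  have hs2 : L * r^2 + (Bbar/2) * r^2 + m * K * r^2 + N * m * K * r^2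
      ≤ (1-α)/2 * σ * r^2 := by
    have hs := mul_le_mul_of_nonneg_right hscalar (sq_nonneg r)
    calc L * r^2 + (Bbar/2) * r^2 + m * K * r^2 + N * m * K * r^2
        = (L + Bbar/2 + m * K + N * m * K) * r^2 := by ring
      _ ≤ (1-α)/2 * σ * r^2 := hs
  have main : f xbar + h xbar ≤ f x + h x - (α/2) * σ * r^2 := by
    linarith [hdesc1, hsub', herrtot, hrb, hs2]
  refine ⟨main, ?_⟩
  have hsq : ε * ε ≤ (σ * r) * (σ * r) :=
    mul_le_mul hstep hstep hε0.le (by positivity)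
  have h2 : α * ε^2 / (2*σ) ≤ (α/2) * σ * r^2 := by
    rw [div_le_iff₀ (by positivity : (0:ℝ) < 2*σ)]
    have := mul_le_mul_of_nonneg_left hsq hα0.le
    linarith
  linarith
end
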